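/- Let H be an r-uniform hypergraph with the property that for every longest Berge path of H, every edge of H containing a terminal vertex of that path is a defining edge of that path. Let P = v0, e1, v1, e2, v2, …, v_{k−1}, e_k, v_k be a longest Berge path and W = {v1, v2, …, v_k}. If v_i ∈ e1 ∩ W and e_i \ W ≠ ∅ for some 1 ≤ i ≤ k, then e_i is the first edge of some Berge path of length k in H, and every edge of H meeting e_i \ W is one of the defining edges e1,…,e_k of P. -/
import Mathlib


/-- A Berge path of length `k` in a hypergraph with edge set `E`: an alternating
sequence of `k+1` distinct vertices `v 0, …, v k` and `k` distinct edges
`e 0, …, e (k-1)` of `E` with `v i, v (i+1) ∈ e i` for each `i`. -/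
def IsBergePath {V : Type*} [DecidableEq V] (E : Finset (Finset V)) (k : ℕ)
    (v : Fin (k + 1) → V) (e : Fin k → Finset V) : Prop :=
  Function.Injective v ∧ Function.Injective e ∧
    (∀ i, e i ∈ E) ∧ ∀ i : Fin k, v i.castSucc ∈ e i ∧ v i.succ ∈ e i

/-- Lemma 6(ii): in the same setting, if `v_i ∈ e_1 ∩ W` and `e_i \ W ≠ ∅`
(index `i : Fin k` encodes the paper's index `i+1`), then `e_i` is the first edge of
some Berge path of length `k`, and every edge of `H` meeting `e_i \ W` is a defining
edge of `P`. -/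
theorem aux13 {V : Type*} [DecidableEq V]
    (k : ℕ) (hk : 0 < k)
    (E : Finset (Finset V))
    (vv : Fin (k + 1) → V) (ee : Fin k → Finset V)
    (hP : IsBergePath E k vv ee)
    (W : Finset V) (hW : W = Finset.image (fun i : Fin k => vv i.succ) Finset.univ)
    (i : Fin k) (hie : vv i.succ ∈ ee ⟨0, hk⟩)
    (u : V) (huW : u ∉ W) (hue : u ∈ ee i) :
    ∃ (v' : Fin (k + 1) → V) (e' : Fin k → Finset V),
      IsBergePath E k v' e' ∧ e' ⟨0, hk⟩ = ee i ∧ v' 0 = u ∧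
        ∀ j, ∃ j', ee j' = e' j := by
  obtain ⟨hvinj, heinj, hEmem, hinc⟩ := hP
  have hik : i.val < k := i.isLt
  have hnotW : ∀ (x : ℕ) (hx1 : 1 ≤ x) (hx : x < k + 1), u ≠ vv ⟨x, hx⟩ := by
    intro x hx1 hx h
    apply huW
    subst hW
    simp only [Finset.mem_image, Finset.mem_univ, true_and]
    refine ⟨⟨x - 1, by omega⟩, ?_⟩
    rw [h]
    congr 1
    ext
    simp [Fin.succ]
    omega
  have hv0 : ∀ (a : ℕ) (h : a < k), vv ⟨a, by omega⟩ ∈ ee ⟨a, h⟩ := by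
    intro a h
    exact (hinc ⟨a, h⟩).1
  have hv1 : ∀ (a : ℕ) (h : a < k), vv ⟨a + 1, by omega⟩ ∈ ee ⟨a, h⟩ := by
    intro a h
    exact (hinc ⟨a, h⟩).2
  refine ⟨fun j => if j.val = 0 then u else
      vv ⟨if j.val ≤ i.val then i.val + 1 - j.val else j.val,
        by have := j.isLt; split <;> omega⟩,
    fun j => ee ⟨if j.val ≤ i.val then i.val - j.val else j.val,
        by have := j.isLt; split <;> omega⟩,
    ⟨?_, ?_, ?_, ?_⟩, ?_, ?_, ?_⟩
  · -- injective v'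
    intro a b hab
    have hak := a.isLt
    have hbk := b.isLt
    simp only at hab
    by_cases ha : a.val = 0 <;> by_cases hb : b.val = 0
    · ext; omega
    · rw [if_pos ha, if_neg hb] at hab
      exact absurd hab (hnotW _ (by split <;> omega) _)
    · rw [if_neg ha, if_pos hb] at hab
      exact absurd hab.symm (hnotW _ (by split <;> omega) _)
    · rw [if_neg ha, if_neg hb] at hab
      have h2 := hvinj hab
      rw [Fin.mk.injEq] at h2
      ext
      split_ifs at h2 <;> omega
  · -- injective e'
    intro a b hab
    have hak := a.isLt
    have hbk := b.isLt
    simp only at hab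
    have h2 := heinj hab
    rw [Fin.mk.injEq] at h2
    ext
    split_ifs at h2 <;> omega
  · intro j; simp only; exact hEmem _
  · intro j
    have hjk := j.isLt
    constructor
    · -- v' j.castSucc ∈ e' j
      simp only [Fin.coe_castSucc]
      by_cases h0 : j.val = 0
      · rw [if_pos h0]
        have hY : (if j.val ≤ i.val then i.val - j.val else j.val) = i.val := by
          split <;> omega
        simp only [hY]
        exact hue
      · rw [if_neg h0]
        by_cases hji : j.val ≤ i.val
        · have hX : (if j.val ≤ i.val then i.val + 1 - j.val else j.val)
              = (i.val - j.val) + 1 := by split <;> omega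
          have hY : (if j.val ≤ i.val then i.val - j.val else j.val)
              = i.val - j.val := by split <;> omega
          simp only [hX, hY]
          exact hv1 _ (by omega)
        · have hX : (if j.val ≤ i.val then i.val + 1 - j.val else j.val) = j.val := by
            split <;> omega
          have hY : (if j.val ≤ i.val then i.val - j.val else j.val) = j.val := by
            split <;> omega
          simp only [hX, hY]
          exact hv0 _ (by omega)
    · -- v' j.succ ∈ e' j
      simp only [Fin.val_succ, Nat.add_one_ne_zero, if_false]
      by_cases hji : j.val < i.val
      · have hX : (if j.val + 1 ≤ i.val then i.val + 1 - (j.val + 1) else j.val + 1)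
            = i.val - j.val := by split <;> omega
        have hY : (if j.val ≤ i.val then i.val - j.val else j.val)
            = i.val - j.val := by split <;> omega
        simp only [hX, hY]
        exact hv0 _ (by omega)
      · by_cases hji2 : j.val = i.val
        · have hX : (if j.val + 1 ≤ i.val then i.val + 1 - (j.val + 1) else j.val + 1)
              = i.val + 1 := by split <;> omega
          have hY : (if j.val ≤ i.val then i.val - j.val else j.val) = 0 := by
            split <;> omega
          simp only [hX, hY]
          exact hie
        · have hX : (if j.val + 1 ≤ i.val then i.val + 1 - (j.val + 1) else j.val + 1)
              = j.val + 1 := by split <;> omega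
          have hY : (if j.val ≤ i.val then i.val - j.val else j.val) = j.val := by
            split <;> omega
          simp only [hX, hY]
          exact hv1 _ (by omega)
  · -- first edge is ee i
    simp only
    have hY : (if (⟨0, hk⟩ : Fin k).val ≤ i.val
        then i.val - (⟨0, hk⟩ : Fin k).val else (⟨0, hk⟩ : Fin k).val) = i.val := by
      simp
    simp only [hY]
  · simp
  · intro j
    exact ⟨_, rfl⟩

theorem stmt13 {V : Type*} [Fintype V] [DecidableEq V]
    (r k : ℕ) (hk : 0 < k)
    (E : Finset (Finset V)) (hunif : ∀ e ∈ E, e.card = r)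
    (hmax : ∀ (m : ℕ) (v : Fin (m + 1) → V) (e : Fin m → Finset V),
      IsBergePath E m v e → m ≤ k)
    (hterm : ∀ (v : Fin (k + 1) → V) (e : Fin k → Finset V), IsBergePath E k v e →
      ∀ h ∈ E, (v 0 ∈ h ∨ v (Fin.last k) ∈ h) → ∃ i, e i = h)
    (vv : Fin (k + 1) → V) (ee : Fin k → Finset V)
    (hP : IsBergePath E k vv ee)
    (W : Finset V) (hW : W = Finset.image (fun i : Fin k => vv i.succ) Finset.univ)
    (i : Fin k) (hie : vv i.succ ∈ ee ⟨0, hk⟩ ∩ W) (hsub : (ee i \ W).Nonempty) :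
    (∃ (v' : Fin (k + 1) → V) (e' : Fin k → Finset V),
        IsBergePath E k v' e' ∧ e' ⟨0, hk⟩ = ee i) ∧
      ∀ h ∈ E, (h ∩ (ee i \ W)).Nonempty → ∃ j, ee j = h := by
  have hie' : vv i.succ ∈ ee ⟨0, hk⟩ := (Finset.mem_inter.mp hie).1
  constructor
  · obtain ⟨u, hu⟩ := hsub
    rw [Finset.mem_sdiff] at hu
    obtain ⟨v', e', hbp, hfe, -, -⟩ := aux13 k hk E vv ee hP W hW i hie' u hu.2 hu.1
    exact ⟨v', e', hbp, hfe⟩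
  · intro h hE ⟨x, hx⟩
    rw [Finset.mem_inter, Finset.mem_sdiff] at hx
    obtain ⟨v', e', hbp, -, hv0, hperm⟩ :=
      aux13 k hk E vv ee hP W hW i hie' x hx.2.2 hx.2.1
    obtain ⟨j, hj⟩ := hterm v' e' hbp h hE (Or.inl (hv0 ▸ hx.1))
    obtain ⟨j', hj'⟩ := hperm j
    exact ⟨j', hj'.trans hj⟩
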